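/- arXiv:1305.6828 — 2 statements merged into one kernel-verified Lean document; each statement's English description precedes it below -/
import Mathlib

section
/- Let Φ be a Δ₂-regular N-function with left derivative φ and complementary Ψ, on a measure space (Ω, Σ, μ), with S := sup { ∫ Ψ(φ(|v|)) dμ : ‖v‖_(Φ) ≤ 1 } < ∞. If f, g ∈ L^Φ(Ω) are nonnegative with ‖f‖_(Φ) = ‖g‖_(Φ) = 1, then ∫_Ω |Φ(f) − Φ(g)| dμ ≤ 2(S+1)·‖f − g‖_(Φ). In particular, the map f ↦ Φ∘f is Lipschitz from the unit sphere of L^Φ into L¹. -/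
open MeasureTheory Filter
open scoped ENNReal

noncomputable section

/-- An N-function: even, convex, vanishing exactly at 0, with Φ(x)/x → 0 at 0⁺ and → ∞ at ∞. -/
def IsNFunction (Φ : ℝ → ℝ) : Prop :=
  (∀ x, Φ (-x) = Φ x) ∧ ConvexOn ℝ Set.univ Φ ∧ (∀ x, Φ x = 0 ↔ x = 0) ∧
  Tendsto (fun x => Φ x / x) (nhdsWithin 0 (Set.Ioi 0)) (nhds 0) ∧
  Tendsto (fun x => Φ x / x) atTop atTop

/-- The Orlicz modular ρ_Φ(f) = ∫ Φ(f) dμ (as an extended nonnegative real). -/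
def orliczModular {Ω : Type*} [MeasurableSpace Ω] (μ : Measure Ω) (Φ : ℝ → ℝ)
    (f : Ω → ℝ) : ℝ≥0∞ :=
  ∫⁻ x, ENNReal.ofReal (Φ (f x)) ∂μ

/-- The gauge (Luxemburg) norm. -/
def gaugeNorm {Ω : Type*} [MeasurableSpace Ω] (μ : Measure Ω) (Φ : ℝ → ℝ)
    (f : Ω → ℝ) : ℝ :=
  sInf {k : ℝ | 0 < k ∧ orliczModular μ Φ (fun x => f x / k) ≤ 1}

/-- Membership in the Orlicz space L^Φ. -/
def MemOrlicz {Ω : Type*} [MeasurableSpace Ω] (μ : Measure Ω) (Φ : ℝ → ℝ)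
    (f : Ω → ℝ) : Prop :=
  AEMeasurable f μ ∧ ∃ a > 0, orliczModular μ Φ (fun x => a * f x) < ⊤

/-- Lipschitz estimate for f ↦ Φ∘f on the unit sphere of L^Φ:
if S bounds the conjugate modular of the derivative on the closed unit ball, and
f, g ≥ 0 have gauge norm 1, then ∫ |Φ(f) − Φ(g)| dμ ≤ 2(S+1)‖f − g‖_(Φ). -/
theorem modular_lipschitz_on_sphere {Ω : Type*} [MeasurableSpace Ω]
    (μ : Measure Ω) (Φ φ Ψ : ℝ → ℝ) (hΦ : IsNFunction Φ)
    (hΔ2 : ∃ K > 2, ∀ x : ℝ, 0 ≤ x → Φ (2 * x) ≤ K * Φ x)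
    (hφmono : MonotoneOn φ (Set.Ici 0))
    (hder : ∀ x : ℝ, Φ x = ∫ t in (0:ℝ)..|x|, φ t)
    (hΨ : ∀ y : ℝ, Ψ y = sSup ((fun x => x * |y| - Φ x) '' Set.Ici (0:ℝ)))
    (S : ℝ) (hS : 0 ≤ S)
    (hSsup : ∀ v : Ω → ℝ, MemOrlicz μ Φ v → gaugeNorm μ Φ v ≤ 1 →
      orliczModular μ Ψ (fun x => φ |v x|) ≤ ENNReal.ofReal S)
    (f g : Ω → ℝ) (hf : MemOrlicz μ Φ f) (hg : MemOrlicz μ Φ g)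
    (hf0 : ∀ x, 0 ≤ f x) (hg0 : ∀ x, 0 ≤ g x)
    (hfn : gaugeNorm μ Φ f = 1) (hgn : gaugeNorm μ Φ g = 1) :
    ∫⁻ x, ENNReal.ofReal |Φ (f x) - Φ (g x)| ∂μ ≤
      ENNReal.ofReal (2 * (S + 1) * gaugeNorm μ Φ (fun x => f x - g x)) := by
  obtain ⟨heven, hconv, hzero, -, htop⟩ := hΦ
  have Φ0 : Φ 0 = 0 := (hzero 0).mpr rfl
  have Φnn : ∀ x, 0 ≤ Φ x := by
    intro x
    have h := hconv.2 (Set.mem_univ x) (Set.mem_univ (-x))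
      (by norm_num : (0:ℝ) ≤ 1/2) (by norm_num : (0:ℝ) ≤ 1/2) (by norm_num)
    have hx : (1/2 : ℝ) • x + (1/2 : ℝ) • (-x) = 0 := by
      rw [smul_eq_mul, smul_eq_mul]; ring
    rw [hx, Φ0, heven x] at h
    simp only [smul_eq_mul] at h
    linarith
  have Φmono : ∀ a b : ℝ, 0 ≤ a → a ≤ b → Φ a ≤ Φ b := by
    intro a b ha hab
    rcases eq_or_lt_of_le (ha.trans hab) with hb | hb
    · have ha0 : a = 0 := le_antisymm (hab.trans hb.symm.le) ha
      rw [ha0, ← hb]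
    · have hab1 : a / b ≤ 1 := (div_le_one hb).mpr hab
      have h := hconv.2 (Set.mem_univ b) (Set.mem_univ 0)
        (div_nonneg ha hb.le) (by linarith : (0:ℝ) ≤ 1 - a / b) (by ring)
      have hx : (a/b : ℝ) • b + (1 - a/b : ℝ) • (0:ℝ) = a := by
        rw [smul_zero, add_zero, smul_eq_mul, div_mul_cancel₀ a hb.ne']
      rw [hx, Φ0] at h
      simp only [smul_eq_mul] at h
      nlinarith [Φnn b]
  have Φabs : ∀ t : ℝ, Φ |t| = Φ t := by
    intro t
    rcases abs_cases t with ⟨h, -⟩ | ⟨h, -⟩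
    · rw [h]
    · rw [h, heven]
  have hint : ∀ a b : ℝ, 0 ≤ a → a ≤ b → IntervalIntegrable φ volume a b := by
    intro a b ha hab
    apply MonotoneOn.intervalIntegrable
    apply hφmono.mono
    rw [Set.uIcc_of_le hab]
    exact fun t ht => ha.trans ht.1
  have key : ∀ a b : ℝ, 0 ≤ b → b ≤ a → Φ a - Φ b = ∫ t in b..a, φ t := by
    intro a b hb hba
    have ha : 0 ≤ a := hb.trans hba
    have h1 := hder a; have h2 := hder b
    rw [abs_of_nonneg ha] at h1; rw [abs_of_nonneg hb] at h2
    have h3 := intervalIntegral.integral_add_adjacent_intervals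
      (hint 0 b le_rfl hb) (hint b a hb hba)
    rw [h1, h2, ← h3]; ring
  have intbound : ∀ a b : ℝ, 0 ≤ b → b ≤ a → (∫ t in b..a, φ t) ≤ (a - b) * φ a := by
    intro a b hb hba
    have ha : 0 ≤ a := hb.trans hba
    have h := intervalIntegral.integral_mono_on hba (hint b a hb hba)
      intervalIntegrable_const
      (fun t ht => hφmono (Set.mem_Ici.mpr (hb.trans ht.1)) (Set.mem_Ici.mpr ha) ht.2)
    simpa [smul_eq_mul, mul_comm] using h
  have φpos : ∀ c : ℝ, 0 < c → 0 ≤ φ c := by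
    intro c hc
    by_contra h; push_neg at h
    have h1 : Φ c - Φ 0 ≤ (c - 0) * φ c := (key c 0 le_rfl hc.le).le.trans (intbound c 0 le_rfl hc.le)
    have h2 : 0 < Φ c :=
      (Φnn c).lt_of_ne (fun hh => hc.ne' ((hzero c).mp hh.symm))
    rw [Φ0, sub_zero, sub_zero] at h1
    nlinarith
  have ptwise : ∀ a b : ℝ, 0 ≤ a → 0 ≤ b →
      |Φ a - Φ b| ≤ |a - b| * (max (φ a) 0 + max (φ b) 0) := by
    have aux : ∀ a b : ℝ, 0 ≤ b → b ≤ a → Φ a - Φ b ≤ (a - b) * max (φ a) 0 := by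
      intro a b hb hba
      rw [key a b hb hba]
      exact (intbound a b hb hba).trans
        (mul_le_mul_of_nonneg_left (le_max_left _ _) (sub_nonneg.mpr hba))
    intro a b ha hb
    rcases le_total b a with h | h
    · rw [abs_of_nonneg (sub_nonneg.mpr (Φmono b a hb h)), abs_of_nonneg (sub_nonneg.mpr h)]
      have h1 := aux a b hb h
      nlinarith [le_max_right (φ b) 0, sub_nonneg.mpr h]
    · rw [abs_sub_comm, abs_sub_comm a b,
        abs_of_nonneg (sub_nonneg.mpr (Φmono a b ha h)), abs_of_nonneg (sub_nonneg.mpr h)]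
      have h1 := aux b a ha h
      nlinarith [le_max_right (φ a) 0, sub_nonneg.mpr h]
  -- Ψ facts
  have bdd : ∀ y : ℝ, BddAbove ((fun x => x * |y| - Φ x) '' Set.Ici 0) := by
    intro y
    obtain ⟨M, hM⟩ := eventually_atTop.mp (htop.eventually_ge_atTop |y|)
    refine ⟨max M 1 * |y|, ?_⟩
    rintro z ⟨x, hx, rfl⟩
    simp only [] 
    rcases le_total x (max M 1) with h | h
    · have h1 : x * |y| ≤ max M 1 * |y| := mul_le_mul_of_nonneg_right h (abs_nonneg y)
      have := Φnn x; linarith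
    · have hx1 : (1:ℝ) ≤ x := le_trans (le_max_right M 1) h
      have hMx : M ≤ x := le_trans (le_max_left M 1) h
      have h2 := hM x hMx
      have hxpos : 0 < x := lt_of_lt_of_le one_pos hx1
      have h3 : x * |y| ≤ Φ x := by
        rw [le_div_iff₀ hxpos] at h2; linarith
      have h0 : 0 ≤ max M 1 * |y| :=
        mul_nonneg (le_trans zero_le_one (le_max_right M 1)) (abs_nonneg y)
      linarith
  have Ψnn : ∀ y : ℝ, 0 ≤ Ψ y := by
    intro y
    rw [hΨ y]
    have hmem : (0:ℝ) ∈ (fun x => x * |y| - Φ x) '' Set.Ici 0 :=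
      ⟨0, Set.self_mem_Ici, by simp [Φ0]⟩
    exact le_csSup (bdd y) hmem
  have Ψ0 : Ψ 0 = 0 := by
    refine le_antisymm ?_ (Ψnn 0)
    rw [hΨ 0]
    refine csSup_le ⟨0 * |(0:ℝ)| - Φ 0, ⟨0, Set.self_mem_Ici, rfl⟩⟩ ?_
    rintro z ⟨x, hx, rfl⟩
    simp only [abs_zero, mul_zero, zero_sub, neg_nonpos]
    exact Φnn x
  have young : ∀ x y : ℝ, 0 ≤ x → x * y ≤ Φ x + Ψ y := by
    intro x y hx
    have h1 : x * |y| - Φ x ≤ Ψ y := by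
      rw [hΨ y]; exact le_csSup (bdd y) ⟨x, hx, rfl⟩
    have h2 := mul_le_mul_of_nonneg_left (le_abs_self y) hx
    linarith
  have Ψmono : ∀ y z : ℝ, 0 ≤ y → y ≤ z → Ψ y ≤ Ψ z := by
    intro y z hy hyz
    rw [hΨ y, hΨ z]
    refine csSup_le ⟨0 * |y| - Φ 0, ⟨0, Set.self_mem_Ici, rfl⟩⟩ ?_
    rintro w ⟨x, hx, rfl⟩
    refine le_trans ?_ (le_csSup (bdd z) ⟨x, hx, rfl⟩)
    have hyz' : |y| ≤ |z| := by
      rw [abs_of_nonneg hy, abs_of_nonneg (hy.trans hyz)]; exact hyz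
    have := mul_le_mul_of_nonneg_left hyz' hx
    simp only []
    linarith
  have ΨφΦ : ∀ t : ℝ, Ψ (max (φ t) 0) ≤ Ψ (φ t) := by
    intro t
    rcases le_or_gt 0 (φ t) with h | h
    · rw [max_eq_left h]
    · rw [max_eq_right h.le, Ψ0]; exact Ψnn _
  -- measurability
  have measΦ : Measurable (fun t : ℝ => Φ (max t 0)) := by
    apply Monotone.measurable
    intro s t hst
    exact Φmono _ _ (le_max_right s 0) (max_le_max hst le_rfl)
  have measΘ : Measurable (fun t : ℝ => Ψ (max (φ (max t 0)) 0)) := by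
    apply Monotone.measurable
    intro s t hst
    refine Ψmono _ _ (le_max_right _ 0) (max_le_max ?_ le_rfl)
    exact hφmono (Set.mem_Ici.mpr (le_max_right s 0)) (Set.mem_Ici.mpr (le_max_right t 0))
      (max_le_max hst le_rfl)
  have aΦf : AEMeasurable (fun x => ENNReal.ofReal (Φ (f x))) μ := by
    have h : (fun x => ENNReal.ofReal (Φ (f x)))
        = (fun t => ENNReal.ofReal (Φ (max t 0))) ∘ f := by
      funext x; simp [max_eq_left (hf0 x)]
    rw [h]
    exact (ENNReal.measurable_ofReal.comp measΦ).comp_aemeasurable hf.1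
  have aΦg : AEMeasurable (fun x => ENNReal.ofReal (Φ (g x))) μ := by
    have h : (fun x => ENNReal.ofReal (Φ (g x)))
        = (fun t => ENNReal.ofReal (Φ (max t 0))) ∘ g := by
      funext x; simp [max_eq_left (hg0 x)]
    rw [h]
    exact (ENNReal.measurable_ofReal.comp measΦ).comp_aemeasurable hg.1
  have aefg : AEMeasurable (fun x => f x - g x) μ := hf.1.sub hg.1
  have aMod : ∀ k : ℝ, 0 < k →
      AEMeasurable (fun x => ENNReal.ofReal (Φ (|f x - g x| / k))) μ := by
    intro k hk
    have h : (fun x => ENNReal.ofReal (Φ (|f x - g x| / k)))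
        = (fun t => ENNReal.ofReal (Φ (max t 0))) ∘ (fun x => |f x - g x| / k) := by
      funext x
      simp [max_eq_left (div_nonneg (abs_nonneg _) hk.le)]
    rw [h]
    have habs : AEMeasurable (fun x => |f x - g x|) μ := by
      simpa [Real.norm_eq_abs] using aefg.norm
    exact (ENNReal.measurable_ofReal.comp measΦ).comp_aemeasurable (habs.div_const k)
  have aΘf : AEMeasurable (fun x => ENNReal.ofReal (Ψ (max (φ (f x)) 0))) μ := by
    have h : (fun x => ENNReal.ofReal (Ψ (max (φ (f x)) 0)))
        = (fun t => ENNReal.ofReal (Ψ (max (φ (max t 0)) 0))) ∘ f := by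
      funext x; simp [max_eq_left (hf0 x)]
    rw [h]
    exact (ENNReal.measurable_ofReal.comp measΘ).comp_aemeasurable hf.1
  -- finiteness of modulars
  obtain ⟨K, hK2, hΔ⟩ := hΔ2
  have hK0 : (0:ℝ) ≤ K := by linarith
  have pow2 : ∀ n : ℕ, ∀ t : ℝ, 0 ≤ t → Φ (2 ^ n * t) ≤ K ^ n * Φ t := by
    intro n
    induction n with
    | zero => intro t ht; simp
    | succ n ih =>
      intro t ht
      have he : (2:ℝ) ^ (n+1) * t = 2 * (2 ^ n * t) := by ring
      rw [he, pow_succ]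
      calc Φ (2 * (2 ^ n * t)) ≤ K * Φ (2 ^ n * t) := hΔ _ (by positivity)
        _ ≤ K * (K ^ n * Φ t) := mul_le_mul_of_nonneg_left (ih t ht) hK0
        _ = K ^ n * K * Φ t := by ring
  have modfin : ∀ v : Ω → ℝ, (∀ x, 0 ≤ v x) →
      (∃ a > 0, orliczModular μ Φ (fun x => a * v x) < ⊤) →
      ∫⁻ x, ENNReal.ofReal (Φ (v x)) ∂μ < ⊤ := by
    rintro v hv0 ⟨a, ha, hva⟩
    obtain ⟨n, hn⟩ : ∃ n : ℕ, 1 / a < 2 ^ n := pow_unbounded_of_one_lt _ one_lt_two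
    have han : 1 ≤ a * 2 ^ n := by
      rw [div_lt_iff₀ ha] at hn
      nlinarith
    have hpt : ∀ x, Φ (v x) ≤ K ^ n * Φ (a * v x) := by
      intro x
      calc Φ (v x) ≤ Φ (2 ^ n * (a * v x)) := by
            apply Φmono _ _ (hv0 x)
            nlinarith [hv0 x]
        _ ≤ K ^ n * Φ (a * v x) := pow2 n _ (mul_nonneg ha.le (hv0 x))
    calc ∫⁻ x, ENNReal.ofReal (Φ (v x)) ∂μ
        ≤ ∫⁻ x, ENNReal.ofReal (K ^ n * Φ (a * v x)) ∂μ :=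
          lintegral_mono fun x => ENNReal.ofReal_le_ofReal (hpt x)
      _ = ENNReal.ofReal (K ^ n) * ∫⁻ x, ENNReal.ofReal (Φ (a * v x)) ∂μ := by
          simp_rw [ENNReal.ofReal_mul (by positivity : (0:ℝ) ≤ K ^ n)]
          exact lintegral_const_mul' _ _ ENNReal.ofReal_ne_top
      _ < ⊤ := ENNReal.mul_lt_top ENNReal.ofReal_lt_top hva
  have hIf : ∫⁻ x, ENNReal.ofReal (Φ (f x)) ∂μ < ⊤ := modfin f hf0 hf.2
  have hIg : ∫⁻ x, ENNReal.ofReal (Φ (g x)) ∂μ < ⊤ := modfin g hg0 hg.2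
  -- the gauge set for f - g is nonempty
  set Aset : Set ℝ :=
    {k : ℝ | 0 < k ∧ orliczModular μ Φ (fun x => (f x - g x) / k) ≤ 1} with hAset
  have hAne : Aset.Nonempty := by
    set C := (∫⁻ x, ENNReal.ofReal (Φ (f x)) ∂μ) + ∫⁻ x, ENNReal.ofReal (Φ (g x)) ∂μ with hC
    have hCfin : C ≠ ⊤ := (ENNReal.add_lt_top.mpr ⟨hIf, hIg⟩).ne
    set m := C.toReal + 1 with hm
    have hm1 : (1:ℝ) ≤ m := by
      have := ENNReal.toReal_nonneg (a := C); simp only [hm]; linarith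
    have hmpos : (0:ℝ) < m := lt_of_lt_of_le one_pos hm1
    refine ⟨m, hmpos, ?_⟩
    have hpt : ∀ x, Φ ((f x - g x) / m) ≤ 1 / m * (Φ (f x) + Φ (g x)) := by
      intro x
      have h1 : Φ ((f x - g x) / m) = Φ (|f x - g x| / m) := by
        rw [← Φabs ((f x - g x) / m), abs_div, abs_of_pos hmpos]
      have h2 : |f x - g x| ≤ max (f x) (g x) := by
        rw [abs_sub_le_iff]
        constructor
        · have := hg0 x; have := le_max_left (f x) (g x); linarith
        · have := hf0 x; have := le_max_right (f x) (g x); linarith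
      have h5 : ∀ t : ℝ, 0 ≤ t → Φ (t / m) ≤ 1 / m * Φ t := by
        intro t ht
        have hinv : (0:ℝ) ≤ 1/m := by positivity
        have hinv1 : 1/m ≤ 1 := by
          rw [div_le_one hmpos]; exact hm1
        have h := hconv.2 (Set.mem_univ t) (Set.mem_univ 0) hinv
          (by linarith : (0:ℝ) ≤ 1 - 1/m) (by ring)
        have hx : (1/m : ℝ) • t + (1 - 1/m : ℝ) • (0:ℝ) = t / m := by
          rw [smul_eq_mul, smul_eq_mul]; ring
        rw [hx, Φ0] at h
        simp only [smul_eq_mul] at h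
        linarith
      have h3 : Φ (|f x - g x| / m) ≤ Φ (max (f x) (g x) / m) :=
        Φmono _ _ (by positivity) ((div_le_div_iff_of_pos_right hmpos).mpr h2)
      have h4 : Φ (max (f x) (g x) / m) ≤ 1 / m * (Φ (f x) + Φ (g x)) := by
        rcases le_total (f x) (g x) with h | h
        · rw [max_eq_right h]
          have := h5 (g x) (hg0 x)
          have hfnn : 0 ≤ Φ (f x) := Φnn _
          have : (0:ℝ) ≤ 1/m := by positivity
          nlinarith [Φnn (f x)]
        · rw [max_eq_left h]
          have := h5 (f x) (hf0 x)
          have : (0:ℝ) ≤ 1/m := by positivity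
          nlinarith [Φnn (g x)]
      linarith
    show orliczModular μ Φ (fun x => (f x - g x) / m) ≤ 1
    calc orliczModular μ Φ (fun x => (f x - g x) / m)
        ≤ ∫⁻ x, ENNReal.ofReal (1/m) *
            (ENNReal.ofReal (Φ (f x)) + ENNReal.ofReal (Φ (g x))) ∂μ := by
          refine lintegral_mono fun x => ?_
          rw [← ENNReal.ofReal_add (Φnn _) (Φnn _),
            ← ENNReal.ofReal_mul (by positivity : (0:ℝ) ≤ 1/m)]
          exact ENNReal.ofReal_le_ofReal (hpt x)
      _ = ENNReal.ofReal (1/m) * C := by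
          rw [lintegral_const_mul' _ _ ENNReal.ofReal_ne_top,
            lintegral_add_left' aΦf]
      _ ≤ ENNReal.ofReal (1/m) * ENNReal.ofReal m := by
          refine mul_le_mul_right ?_ _
          rw [← ENNReal.ofReal_toReal hCfin]
          exact ENNReal.ofReal_le_ofReal (by simp only [hm]; linarith)
      _ = 1 := by
          rw [← ENNReal.ofReal_mul (by positivity : (0:ℝ) ≤ 1/m),
            one_div_mul_cancel hmpos.ne']
          simp
  -- the conjugate-modular bounds
  have hΨbound : ∀ v : Ω → ℝ, (∀ x, 0 ≤ v x) → MemOrlicz μ Φ v → gaugeNorm μ Φ v = 1 →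
      ∫⁻ x, ENNReal.ofReal (Ψ (max (φ (v x)) 0)) ∂μ ≤ ENNReal.ofReal S := by
    intro v hv0 hv hvn
    refine le_trans (lintegral_mono fun x => ENNReal.ofReal_le_ofReal (ΨφΦ (v x))) ?_
    have h := hSsup v hv (le_of_eq hvn)
    unfold orliczModular at h
    have he : ∀ x, φ |v x| = φ (v x) := fun x => by rw [abs_of_nonneg (hv0 x)]
    simp_rw [he] at h
    exact h
  have hΨf := hΨbound f hf0 hf hfn
  have hΨg := hΨbound g hg0 hg hgn
  -- main estimate for each admissible k
  have main : ∀ k : ℝ, 0 < k → orliczModular μ Φ (fun x => (f x - g x) / k) ≤ 1 →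
      ∫⁻ x, ENNReal.ofReal |Φ (f x) - Φ (g x)| ∂μ ≤ ENNReal.ofReal (2 * (S + 1) * k) := by
    intro k hk hmod
    have hmodk : ∫⁻ x, ENNReal.ofReal (Φ (|f x - g x| / k)) ∂μ ≤ 1 := by
      unfold orliczModular at hmod
      have he : ∀ x, Φ (|f x - g x| / k) = Φ ((f x - g x) / k) := fun x => by
        rw [← Φabs ((f x - g x) / k), abs_div, abs_of_pos hk]
      simp_rw [he]
      exact hmod
    have hpt : ∀ x, |Φ (f x) - Φ (g x)| ≤
        k * Φ (|f x - g x| / k) + k * Ψ (max (φ (f x)) 0) +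
        (k * Φ (|f x - g x| / k) + k * Ψ (max (φ (g x)) 0)) := by
      intro x
      have h1 := ptwise (f x) (g x) (hf0 x) (hg0 x)
      have h2 : |f x - g x| * max (φ (f x)) 0 ≤
          k * (Φ (|f x - g x| / k) + Ψ (max (φ (f x)) 0)) := by
        have hy := young (|f x - g x| / k) (max (φ (f x)) 0) (by positivity)
        have he : |f x - g x| * max (φ (f x)) 0
            = k * (|f x - g x| / k * max (φ (f x)) 0) := by field_simp
        rw [he]
        exact mul_le_mul_of_nonneg_left hy hk.le
      have h3 : |f x - g x| * max (φ (g x)) 0 ≤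
          k * (Φ (|f x - g x| / k) + Ψ (max (φ (g x)) 0)) := by
        have hy := young (|f x - g x| / k) (max (φ (g x)) 0) (by positivity)
        have he : |f x - g x| * max (φ (g x)) 0
            = k * (|f x - g x| / k * max (φ (g x)) 0) := by field_simp
        rw [he]
        exact mul_le_mul_of_nonneg_left hy hk.le
      have hexp : |f x - g x| * (max (φ (f x)) 0 + max (φ (g x)) 0)
          = |f x - g x| * max (φ (f x)) 0 + |f x - g x| * max (φ (g x)) 0 :=
        mul_add _ _ _
      rw [hexp] at h1
      linarith
    have hΦ1 : ∫⁻ x, ENNReal.ofReal (k * Φ (|f x - g x| / k)) ∂μ ≤ ENNReal.ofReal k := by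
      simp_rw [ENNReal.ofReal_mul hk.le]
      rw [lintegral_const_mul' _ _ ENNReal.ofReal_ne_top]
      calc ENNReal.ofReal k * ∫⁻ x, ENNReal.ofReal (Φ (|f x - g x| / k)) ∂μ
          ≤ ENNReal.ofReal k * 1 := mul_le_mul_right hmodk _
        _ = ENNReal.ofReal k := mul_one _
    have hΨ1 : ∫⁻ x, ENNReal.ofReal (k * Ψ (max (φ (f x)) 0)) ∂μ
        ≤ ENNReal.ofReal k * ENNReal.ofReal S := by
      simp_rw [ENNReal.ofReal_mul hk.le]
      rw [lintegral_const_mul' _ _ ENNReal.ofReal_ne_top]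
      exact mul_le_mul_right hΨf _
    have hΨ2 : ∫⁻ x, ENNReal.ofReal (k * Ψ (max (φ (g x)) 0)) ∂μ
        ≤ ENNReal.ofReal k * ENNReal.ofReal S := by
      simp_rw [ENNReal.ofReal_mul hk.le]
      rw [lintegral_const_mul' _ _ ENNReal.ofReal_ne_top]
      exact mul_le_mul_right hΨg _
    have hsplit : ∫⁻ x, ENNReal.ofReal |Φ (f x) - Φ (g x)| ∂μ ≤
        (∫⁻ x, ENNReal.ofReal (k * Φ (|f x - g x| / k)) ∂μ)
        + (∫⁻ x, ENNReal.ofReal (k * Ψ (max (φ (f x)) 0)) ∂μ)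
        + ((∫⁻ x, ENNReal.ofReal (k * Φ (|f x - g x| / k)) ∂μ)
          + ∫⁻ x, ENNReal.ofReal (k * Ψ (max (φ (g x)) 0)) ∂μ) := by
      have haux : ∀ x, ENNReal.ofReal |Φ (f x) - Φ (g x)| ≤
          ENNReal.ofReal (k * Φ (|f x - g x| / k)) + ENNReal.ofReal (k * Ψ (max (φ (f x)) 0))
          + (ENNReal.ofReal (k * Φ (|f x - g x| / k))
            + ENNReal.ofReal (k * Ψ (max (φ (g x)) 0))) := by
        intro x
        have hA : (0:ℝ) ≤ k * Φ (|f x - g x| / k) := mul_nonneg hk.le (Φnn _)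
        have hB : (0:ℝ) ≤ k * Ψ (max (φ (f x)) 0) := mul_nonneg hk.le (Ψnn _)
        have hD : (0:ℝ) ≤ k * Ψ (max (φ (g x)) 0) := mul_nonneg hk.le (Ψnn _)
        rw [← ENNReal.ofReal_add hA hD, ← ENNReal.ofReal_add hA hB,
          ← ENNReal.ofReal_add (by linarith) (by linarith)]
        exact ENNReal.ofReal_le_ofReal (hpt x)
      refine le_trans (lintegral_mono haux) ?_
      have amul : ∀ c : ℝ≥0∞, ∀ h : Ω → ℝ≥0∞, AEMeasurable h μ → c ≠ ⊤ →
          AEMeasurable (fun x => c * h x) μ := fun c h hh hc => hh.const_mul c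
      have a1 : AEMeasurable (fun x => ENNReal.ofReal (k * Φ (|f x - g x| / k))) μ := by
        simp_rw [ENNReal.ofReal_mul hk.le]
        exact (aMod k hk).const_mul _
      have a2 : AEMeasurable (fun x => ENNReal.ofReal (k * Ψ (max (φ (f x)) 0))) μ := by
        simp_rw [ENNReal.ofReal_mul hk.le]
        exact aΘf.const_mul _
      rw [lintegral_add_left' (show AEMeasurable (fun x => ENNReal.ofReal (k * Φ (|f x - g x| / k)) + ENNReal.ofReal (k * Ψ (max (φ (f x)) 0))) μ from a1.add a2), lintegral_add_left' a1, lintegral_add_left' a1]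
    have hSk : ENNReal.ofReal k + ENNReal.ofReal k * ENNReal.ofReal S
        + (ENNReal.ofReal k + ENNReal.ofReal k * ENNReal.ofReal S)
        = ENNReal.ofReal (2 * (S + 1) * k) := by
      rw [← ENNReal.ofReal_mul hk.le, ← ENNReal.ofReal_add hk.le (by positivity),
        ← ENNReal.ofReal_add (by positivity) (by positivity)]
      congr 1
      ring
    calc ∫⁻ x, ENNReal.ofReal |Φ (f x) - Φ (g x)| ∂μ
        ≤ _ := hsplit
      _ ≤ ENNReal.ofReal k + ENNReal.ofReal k * ENNReal.ofReal S
          + (ENNReal.ofReal k + ENNReal.ofReal k * ENNReal.ofReal S) := by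
          gcongr
      _ = ENNReal.ofReal (2 * (S + 1) * k) := hSk
  -- conclusion
  have hNinf : gaugeNorm μ Φ (fun x => f x - g x) = sInf Aset := rfl
  have hNnn : 0 ≤ gaugeNorm μ Φ (fun x => f x - g x) := by
    rw [hNinf]
    exact Real.sInf_nonneg (fun k hk => hk.1.le)
  refine ENNReal.le_of_forall_pos_le_add fun ε hε _ => ?_
  have hc : (0:ℝ) < 2 * (S + 1) := by linarith
  have hδpos : (0:ℝ) < (ε:ℝ) / (2 * (S + 1)) := div_pos (by exact_mod_cast hε) hc
  obtain ⟨k, hkA, hklt⟩ := Real.lt_sInf_add_pos hAne hδpos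
  have hmain := main k hkA.1 hkA.2
  refine le_trans hmain ?_
  have hkle : 2 * (S + 1) * k ≤
      2 * (S + 1) * (gaugeNorm μ Φ (fun x => f x - g x) + (ε:ℝ) / (2 * (S + 1))) := by
    rw [hNinf]
    exact mul_le_mul_of_nonneg_left hklt.le hc.le
  refine le_trans (ENNReal.ofReal_le_ofReal hkle) ?_
  rw [mul_add, ENNReal.ofReal_add (by positivity) (by positivity)]
  gcongr
  rw [mul_div_cancel₀ _ hc.ne']
  simp
end
end

section
/- Let G be a second countable locally compact group, H a closed subgroup, and Φ a Δ₂-regular N-function. If the left regular representation of H on L^Φ(G) almost has invariant vectors (for every compact F ⊆ H and ε > 0 there is f ∈ L^Φ(G) with ‖f‖_(Φ) = 1 and ‖λ_G(z)f − f‖_(Φ) ≤ ε for all z ∈ F), then H satisfies Reiter's condition (P₁): for every compact F ⊆ H and ε > 0 there exists U ∈ L¹(H), U ≥ 0, ‖U‖_{L¹(H)} = 1, with ‖λ_H(z)U − U‖_{L¹(H)} < ε for all z ∈ F. -/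
open MeasureTheory Filter
open scoped ENNReal

noncomputable section

section Phi
variable {Φ : ℝ → ℝ} (heven : ∀ x, Φ (-x) = Φ x) (hconv : ConvexOn ℝ Set.univ Φ)
  (hzero : ∀ x, Φ x = 0 ↔ x = 0)

include hzero in
lemma phi_zero : Φ 0 = 0 := (hzero 0).2 rfl

include heven hconv hzero in
lemma phi_nonneg (x : ℝ) : 0 ≤ Φ x := by
  have h := hconv.2 (Set.mem_univ x) (Set.mem_univ (-x)) (le_of_lt one_half_pos)
    (le_of_lt one_half_pos) (by norm_num)
  simp only [smul_eq_mul] at h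
  have : (1:ℝ)/2 * x + 1/2 * -x = 0 := by ring
  rw [this, phi_zero hzero, heven] at h
  nlinarith

include heven hconv hzero in
lemma phi_mono {a b : ℝ} (ha : 0 ≤ a) (hab : a ≤ b) : Φ a ≤ Φ b := by
  rcases eq_or_lt_of_le (ha.trans hab) with hb | hb
  · have : a = 0 := le_antisymm (hab.trans hb.symm.le) ha
    rw [this, ← hb, phi_zero hzero]
  · -- a = (1 - t) * 0 + t * b with t = a / b
    have h := hconv.2 (Set.mem_univ (0:ℝ)) (Set.mem_univ b)
      (show (0:ℝ) ≤ 1 - a/b by rw [sub_nonneg, div_le_one hb]; exact hab)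
      (show (0:ℝ) ≤ a/b by positivity) (by ring)
    simp only [smul_eq_mul, mul_zero, zero_add, phi_zero hzero, mul_zero] at h
    rw [div_mul_cancel₀ _ hb.ne'] at h
    have h1 : a / b ≤ 1 := by
      rw [div_le_one hb]; exact hab
    nlinarith [phi_nonneg heven hconv hzero b]

include heven in
lemma phi_abs (x : ℝ) : Φ |x| = Φ x := by
  rcases abs_cases x with ⟨h, _⟩ | ⟨h, _⟩
  · rw [h]
  · rw [h, heven]

end Phi

section Phi2
variable {Φ : ℝ → ℝ} {K : ℝ} (heven : ∀ x, Φ (-x) = Φ x) (hconv : ConvexOn ℝ Set.univ Φ)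
  (hzero : ∀ x, Φ x = 0 ↔ x = 0) (hK : 2 < K) (hΔ : ∀ x : ℝ, 0 ≤ x → Φ (2 * x) ≤ K * Φ x)

include heven hΔ in
lemma phi_two (t : ℝ) : Φ (2 * t) ≤ K * Φ t := by
  rcases le_or_gt 0 t with h | h
  · exact hΔ t h
  · have := hΔ (-t) (by linarith)
    rw [show (2:ℝ) * -t = -(2*t) by ring, heven, heven] at this
    exact this

include hconv in
lemma phi_midpoint (u v : ℝ) : Φ (u + v) ≤ (Φ (2*u) + Φ (2*v))/2 := by
  have h := hconv.2 (Set.mem_univ (2*u)) (Set.mem_univ (2*v))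
    (show (0:ℝ) ≤ 1/2 by norm_num) (show (0:ℝ) ≤ 1/2 by norm_num) (by norm_num)
  simp only [smul_eq_mul] at h
  rw [show (1:ℝ)/2 * (2*u) + 1/2 * (2*v) = u + v by ring] at h
  linarith

include heven hconv hzero hK hΔ in
lemma phi_key {s b d : ℝ} (hs : 0 < s) (hs2 : s ≤ 1/2) (hb : 0 ≤ b) (hd : 0 ≤ d) :
    Φ (b + d) ≤ (1 + s * K) * Φ b + s * Φ (d / s) := by
  set r : ℝ := 1 / (1 - s) with hr
  have h1s : (0:ℝ) < 1 - s := by linarith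
  have hr1 : 1 ≤ r := by rw [hr, le_div_iff₀ h1s]; linarith
  have hr2 : r ≤ 2 := by rw [hr, div_le_iff₀ h1s]; linarith
  have step1 : Φ (b + d) ≤ (1 - s) * Φ (r * b) + s * Φ (d / s) := by
    have h := hconv.2 (Set.mem_univ (r * b)) (Set.mem_univ (d / s))
      (le_of_lt h1s) (le_of_lt hs) (by ring)
    simp only [smul_eq_mul] at h
    have hrb : (1 - s) * (r * b) = b := by rw [hr]; field_simp
    have hds : s * (d / s) = d := by field_simp
    rw [hrb, hds] at h
    exact h
  have step2 : Φ (r * b) ≤ (2 - r) * Φ b + (r - 1) * Φ (2 * b) := by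
    have h := hconv.2 (Set.mem_univ b) (Set.mem_univ (2 * b))
      (show (0:ℝ) ≤ 2 - r by linarith) (show (0:ℝ) ≤ r - 1 by linarith) (by ring)
    simp only [smul_eq_mul] at h
    rw [show (2 - r) * b + (r - 1) * (2 * b) = r * b by ring] at h
    exact h
  have h2b : Φ (2 * b) ≤ K * Φ b := phi_two heven hΔ b
  have hb0 : 0 ≤ Φ b := phi_nonneg heven hconv hzero b
  have hcoef : (1 - s) * r = 1 := by rw [hr]; field_simp
  have hp := mul_le_mul_of_nonneg_left h2b (show (0:ℝ) ≤ r - 1 by linarith)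
  have s3 : Φ (r * b) ≤ (2 - r) * Φ b + (r - 1) * (K * Φ b) := by linarith
  have s4 := mul_le_mul_of_nonneg_left s3 (le_of_lt h1s)
  have s5 : (1 - s) * ((2 - r) * Φ b + (r - 1) * (K * Φ b)) =
      (1 - 2*s) * Φ b + s * (K * Φ b) := by
    linear_combination (K * Φ b - Φ b) * hcoef
  rw [s5] at s4
  have : 0 ≤ s * Φ b := mul_nonneg (le_of_lt hs) hb0
  nlinarith [step1, s4]

include heven hconv hzero hK hΔ in
lemma phi_absdiff {s : ℝ} (hs : 0 < s) (hs2 : s ≤ 1/2) (a b : ℝ) :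
    |Φ a - Φ b| ≤ s * K * (Φ a + Φ b) + s * Φ ((a - b) / s) := by
  have key : ∀ u v : ℝ, Φ u - Φ v ≤ s * K * Φ v + s * Φ ((u - v)/s) := by
    intro u v
    have h1 : Φ u ≤ Φ (|v| + |u - v|) := by
      rw [← phi_abs heven u]
      exact phi_mono heven hconv hzero (abs_nonneg u)
        (by have := abs_sub_abs_le_abs_sub u v; linarith [abs_nonneg (u - v)])
    have h2 := phi_key heven hconv hzero hK hΔ (b := |v|) (d := |u - v|) hs hs2
      (abs_nonneg v) (abs_nonneg (u - v))
    rw [phi_abs heven v] at h2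
    have h3 : Φ (|u - v| / s) = Φ ((u - v)/s) := by
      rw [show |u - v|/s = |(u-v)/s| by rw [abs_div, abs_of_pos hs], phi_abs heven]
    rw [h3] at h2
    have hv0 : 0 ≤ Φ v := phi_nonneg heven hconv hzero v
    nlinarith
  have hsym : Φ ((b - a)/s) = Φ ((a - b)/s) := by
    rw [← heven ((b-a)/s)]; ring_nf
  have h1 := key a b
  have h2 := key b a
  rw [hsym] at h2
  have ha0 : 0 ≤ Φ a := phi_nonneg heven hconv hzero a
  have hb0 : 0 ≤ Φ b := phi_nonneg heven hconv hzero b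
  have hK0 : (0:ℝ) < K := by linarith
  have hd0 : 0 ≤ Φ ((a - b)/s) := phi_nonneg heven hconv hzero _
  have hx1 : 0 ≤ s * K * Φ a := by positivity
  have hx2 : 0 ≤ s * K * Φ b := by positivity
  rw [abs_le]
  constructor <;> nlinarith

end Phi2

section Mod
variable {Ω : Type*} [MeasurableSpace Ω] {μ : Measure Ω}
variable {Φ : ℝ → ℝ} {K : ℝ} (heven : ∀ x, Φ (-x) = Φ x) (hconv : ConvexOn ℝ Set.univ Φ)
  (hzero : ∀ x, Φ x = 0 ↔ x = 0) (hK : 2 < K) (hΔ : ∀ x : ℝ, 0 ≤ x → Φ (2 * x) ≤ K * Φ x)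

include heven hconv hzero in
lemma modular_mono {f g : Ω → ℝ} (h : ∀ x, |f x| ≤ |g x|) :
    orliczModular μ Φ f ≤ orliczModular μ Φ g := by
  refine lintegral_mono fun x => ENNReal.ofReal_le_ofReal ?_
  rw [← phi_abs heven (f x), ← phi_abs heven (g x)]
  exact phi_mono heven hconv hzero (abs_nonneg _) (h x)

include heven hK hΔ in
lemma modular_two_le (f : Ω → ℝ) :
    orliczModular μ Φ (fun x => 2 * f x) ≤ ENNReal.ofReal K * orliczModular μ Φ f := by
  rw [orliczModular, orliczModular, ← lintegral_const_mul' _ _ ENNReal.ofReal_ne_top]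
  refine lintegral_mono fun x => ?_
  rw [← ENNReal.ofReal_mul (by linarith)]
  exact ENNReal.ofReal_le_ofReal (phi_two heven hΔ _)

include heven hconv hzero hK hΔ in
lemma modular_scale_lt_top {f : Ω → ℝ} {a : ℝ} (ha : 0 < a)
    (hfin : orliczModular μ Φ (fun x => a * f x) < ⊤) {b : ℝ} (hb : 0 < b) :
    orliczModular μ Φ (fun x => b * f x) < ⊤ := by
  obtain ⟨n, hn⟩ := pow_unbounded_of_one_lt (b / a) (show (1:ℝ) < 2 by norm_num)
  have hba : b ≤ 2 ^ n * a := by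
    rw [div_lt_iff₀ ha] at hn; linarith
  have key : ∀ m : ℕ, orliczModular μ Φ (fun x => 2 ^ m * (a * f x)) ≤
      (ENNReal.ofReal K) ^ m * orliczModular μ Φ (fun x => a * f x) := by
    intro m
    induction m with
    | zero => simp
    | succ m ih =>
      have heq : (fun x => 2 ^ (m+1) * (a * f x)) = (fun x => 2 * (2 ^ m * (a * f x))) := by
        funext x; ring
      rw [heq]
      calc orliczModular μ Φ (fun x => 2 * (2 ^ m * (a * f x)))
          ≤ ENNReal.ofReal K * orliczModular μ Φ (fun x => 2 ^ m * (a * f x)) :=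
            modular_two_le heven hK hΔ _
        _ ≤ ENNReal.ofReal K * ((ENNReal.ofReal K) ^ m * orliczModular μ Φ (fun x => a * f x)) :=
            mul_le_mul_right ih _
        _ = (ENNReal.ofReal K) ^ (m+1) * orliczModular μ Φ (fun x => a * f x) := by ring
  have h1 : orliczModular μ Φ (fun x => b * f x) ≤
      orliczModular μ Φ (fun x => 2 ^ n * (a * f x)) := by
    refine modular_mono heven hconv hzero fun x => ?_
    rw [abs_mul, abs_mul, abs_mul]
    have h2 : |b| ≤ |(2:ℝ)^n| * |a| := by
      rw [abs_of_pos hb, abs_of_pos ha, abs_of_pos (by positivity : (0:ℝ) < (2:ℝ)^n)]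
      exact hba
    calc |b| * |f x| ≤ (|(2:ℝ)^n| * |a|) * |f x| :=
          mul_le_mul_of_nonneg_right h2 (abs_nonneg _)
      _ = |(2:ℝ)^n| * (|a| * |f x|) := by ring
  refine lt_of_le_of_lt (h1.trans (key n)) ?_
  exact ENNReal.mul_lt_top (by simp [ENNReal.pow_lt_top, ENNReal.ofReal_lt_top]) hfin

end Mod

section Gauge
variable {Ω : Type*} [MeasurableSpace Ω] {μ : Measure Ω}
variable {Φ : ℝ → ℝ} {K : ℝ} (heven : ∀ x, Φ (-x) = Φ x) (hconv : ConvexOn ℝ Set.univ Φ)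
  (hzero : ∀ x, Φ x = 0 ↔ x = 0)

include heven hconv hzero in
lemma gauge_set_upward {f : Ω → ℝ} {k k' : ℝ}
    (hk : 0 < k ∧ orliczModular μ Φ (fun x => f x / k) ≤ 1) (hkk' : k ≤ k') :
    0 < k' ∧ orliczModular μ Φ (fun x => f x / k') ≤ 1 := by
  refine ⟨lt_of_lt_of_le hk.1 hkk', le_trans ?_ hk.2⟩
  refine modular_mono heven hconv hzero fun x => ?_
  rw [abs_div, abs_div, abs_of_pos hk.1, abs_of_pos (lt_of_lt_of_le hk.1 hkk')]
  rw [div_le_div_iff₀ (lt_of_lt_of_le hk.1 hkk') hk.1]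
  exact mul_le_mul_of_nonneg_left hkk' (abs_nonneg _)

lemma gauge_bddBelow {f : Ω → ℝ} :
    BddBelow {k : ℝ | 0 < k ∧ orliczModular μ Φ (fun x => f x / k) ≤ 1} :=
  ⟨0, fun _ hx => hx.1.le⟩

include heven hconv hzero in
lemma gauge_modular_le_one {f : Ω → ℝ}
    (hne : {k : ℝ | 0 < k ∧ orliczModular μ Φ (fun x => f x / k) ≤ 1}.Nonempty)
    {s : ℝ} (hs : gaugeNorm μ Φ f < s) :
    orliczModular μ Φ (fun x => f x / s) ≤ 1 := by
  rw [gaugeNorm] at hs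
  obtain ⟨k, hk, hks⟩ := (csInf_lt_iff gauge_bddBelow hne).1 hs
  exact (gauge_set_upward heven hconv hzero hk hks.le).2

lemma gauge_modular_gt_one {f : Ω → ℝ} {c : ℝ} (hg : gaugeNorm μ Φ f = c)
    {s : ℝ} (h0 : 0 < s) (hs : s < c) :
    1 < orliczModular μ Φ (fun x => f x / s) := by
  by_contra h
  push_neg at h
  have : s ∈ {k : ℝ | 0 < k ∧ orliczModular μ Φ (fun x => f x / k) ≤ 1} := ⟨h0, h⟩
  have h2 : gaugeNorm μ Φ f ≤ s := csInf_le gauge_bddBelow this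
  rw [hg] at h2
  linarith

lemma gauge_set_nonempty_of_finite (hcont : Continuous Φ) (hzero' : Φ 0 = 0)
    (hmono : ∀ {a b : ℝ}, 0 ≤ a → a ≤ b → Φ a ≤ Φ b) (heven' : ∀ x, Φ |x| = Φ x)
    {h : Ω → ℝ} (hmeas : Measurable h)
    (hfin : orliczModular μ Φ h < ⊤) :
    {k : ℝ | 0 < k ∧ orliczModular μ Φ (fun x => h x / k) ≤ 1}.Nonempty := by
  have hΦnn : ∀ x : ℝ, 0 ≤ Φ x := fun x => by
    rw [← heven' x, ← hzero']; exact hmono le_rfl (abs_nonneg x)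
  set F : ℕ → Ω → ℝ≥0∞ := fun n x => ENNReal.ofReal (Φ (h x / 2 ^ n)) with hF
  have hFmeas : ∀ n, Measurable (F n) := by
    intro n
    exact ENNReal.measurable_ofReal.comp (hcont.measurable.comp (hmeas.div_const _))
  have hbound : ∀ n, F n ≤ᵐ[μ] fun x => ENNReal.ofReal (Φ (h x)) := by
    intro n
    refine Filter.Eventually.of_forall fun x => ENNReal.ofReal_le_ofReal ?_
    rw [← heven' (h x / 2 ^ n), ← heven' (h x)]
    refine hmono (abs_nonneg _) ?_
    rw [abs_div, abs_of_pos (by positivity : (0:ℝ) < 2 ^ n)]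
    exact div_le_self (abs_nonneg _) (one_le_pow₀ (by norm_num : (1:ℝ) ≤ 2))
  have hlim : ∀ᵐ x ∂μ, Tendsto (fun n => F n x) atTop (nhds 0) := by
    refine Filter.Eventually.of_forall fun x => ?_
    have h1 : Tendsto (fun n : ℕ => h x / 2 ^ n) atTop (nhds 0) := by
      have h2 : Tendsto (fun n : ℕ => ((1:ℝ)/2) ^ n) atTop (nhds 0) :=
        tendsto_pow_atTop_nhds_zero_of_lt_one (by norm_num) (by norm_num)
      have h3 := h2.const_mul (h x)
      rw [mul_zero] at h3
      refine h3.congr fun n => ?_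
      rw [div_pow, one_pow, mul_div_assoc']
      ring_nf
    have h4 : Tendsto (fun n : ℕ => Φ (h x / 2 ^ n)) atTop (nhds 0) := by
      have := (hcont.tendsto 0).comp h1
      rwa [hzero'] at this
    have h5 := (ENNReal.continuous_ofReal.tendsto 0).comp h4
    rwa [ENNReal.ofReal_zero] at h5
  have hdct := tendsto_lintegral_of_dominated_convergence _ hFmeas hbound hfin.ne hlim
  rw [lintegral_zero] at hdct
  have hev : ∀ᶠ n in atTop, (∫⁻ x, F n x ∂μ) < 1 :=
    hdct.eventually_lt_const (by norm_num)
  obtain ⟨n, hn⟩ := hev.exists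
  exact ⟨2 ^ n, by positivity, hn.le⟩

end Gauge

section Bruhat
open scoped Pointwise
variable {G : Type*} [Group G] [TopologicalSpace G]
    [IsTopologicalGroup G] [LocallyCompactSpace G] [SecondCountableTopology G]
    [MeasurableSpace G] [BorelSpace G]
    (H : Subgroup G) (hH : IsClosed (H : Set G))
    (μH : Measure H) [μH.IsHaarMeasure]

include hH

/-- A measurable "Bruhat-type" function: β ≥ 0 measurable with
`∫_H β(h⁻¹ y) dμH(h) = 1` for every `y`. -/
lemma exists_bruhat :
    ∃ β : G → ℝ≥0∞, Measurable β ∧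
      ∀ y : G, ∫⁻ h : H, β ((h : G)⁻¹ * y) ∂μH = 1 := by
  haveI : LocallyCompactSpace H := hH.isClosedEmbedding_subtypeVal.locallyCompactSpace
  haveI : BorelSpace (↥H) := Subtype.borelSpace (H : Set G)
  haveI : SecondCountableTopology (↥H) :=
    hH.isClosedEmbedding_subtypeVal.isEmbedding.secondCountableTopology
  haveI : SigmaFinite μH := inferInstance
  -- compact exhaustion of G
  let E := CompactExhaustion.choice G
  set U : ℕ → Set G := fun n => interior (E (n + 1)) with hU
  have hUopen : ∀ n, IsOpen (U n) := fun n => isOpen_interior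
  have hUcov : ∀ y : G, ∃ n, y ∈ U n := by
    intro y
    obtain ⟨n, hn⟩ := E.exists_mem y
    exact ⟨n, E.subset_interior_succ n hn⟩
  have hUcomp : ∀ n, U n ⊆ E (n + 1) := fun n => interior_subset
  -- the finite constants
  set B : ℕ → Set H := fun n => (Subtype.val : H → G) ⁻¹' (E (n+1) * (E (n+1))⁻¹) with hB
  have hBcomp : ∀ n, IsCompact (B n) := by
    intro n
    refine Topology.IsInducing.isCompact_preimage Topology.IsInducing.subtypeVal ?_
      ((E.isCompact (n+1)).mul (E.isCompact (n+1)).inv)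
    rw [Subtype.range_coe]; exact hH
  set c : ℕ → ℝ≥0∞ := fun n => μH (B n) with hc
  have hcfin : ∀ n, c n < ⊤ := fun n => (hBcomp n).measure_lt_top
  set δ : ℕ → ℝ≥0∞ := fun n => ((2:ℝ≥0∞) ^ n)⁻¹ * (c n + 1)⁻¹ with hδ
  have hδpos : ∀ n, 0 < δ n := by
    intro n
    apply ENNReal.mul_pos
    · simp [ENNReal.pow_ne_top]
    · simp only [ne_eq, ENNReal.inv_eq_zero]
      exact ENNReal.add_ne_top.2 ⟨(hcfin n).ne, ENNReal.one_ne_top⟩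
  set ψ : G → ℝ≥0∞ := fun y => ∑' n, (U n).indicator (fun _ => δ n) y with hψ
  have hψmeas : Measurable ψ := by
    apply Measurable.ennreal_tsum
    intro n
    exact measurable_const.indicator (hUopen n).measurableSet
  have hψpos : ∀ y, 0 < ψ y := by
    intro y
    obtain ⟨n, hn⟩ := hUcov y
    refine lt_of_lt_of_le (hδpos n) ?_
    refine le_trans (le_of_eq ?_) (ENNReal.le_tsum n)
    simp [Set.indicator_of_mem hn]
  -- T function
  set T : G → ℝ≥0∞ := fun y => ∫⁻ h : H, ψ ((h : G)⁻¹ * y) ∂μH with hT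
  have hmeas_pair : Measurable fun p : G × H => ψ ((p.2 : G)⁻¹ * p.1) :=
    hψmeas.comp (((measurable_subtype_coe.comp measurable_snd).inv).mul measurable_fst)
  have hTmeas : Measurable T := Measurable.lintegral_prod_right' hmeas_pair
  have hTinv : ∀ (z : H) (y : G), T ((z : G) * y) = T y := by
    intro z y
    simp only [hT]
    rw [← lintegral_mul_left_eq_self (μ := μH) (fun h : H => ψ ((h : G)⁻¹ * y)) z⁻¹]
    refine lintegral_congr fun h => ?_
    congr 1
    push_cast
    group
  have hTpos : ∀ y, 0 < T y := by
    intro y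
    obtain ⟨n, hn⟩ := hUcov y
    set V : Set H := {h : H | (h : G)⁻¹ * y ∈ U n} with hV
    have hVopen : IsOpen V :=
      (hUopen n).preimage ((continuous_subtype_val.inv).mul continuous_const)
    have hV1 : (1 : H) ∈ V := by simp [hV, hn]
    have h1 : ∀ h : H, (V.indicator (fun _ => δ n) h) ≤ ψ ((h : G)⁻¹ * y) := by
      intro h
      by_cases hh : h ∈ V
      · rw [Set.indicator_of_mem hh]
        exact le_trans (le_of_eq (Set.indicator_of_mem
          (show ((h : G)⁻¹ * y) ∈ U n from hh) (fun _ => δ n)).symm) (ENNReal.le_tsum n)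
      · rw [Set.indicator_of_notMem hh]; exact zero_le
    calc 0 < δ n * μH V := ENNReal.mul_pos (hδpos n).ne' (hVopen.measure_pos μH ⟨1, hV1⟩).ne'
      _ = ∫⁻ h, V.indicator (fun _ => δ n) h ∂μH := by
          rw [lintegral_indicator hVopen.measurableSet, setLIntegral_const, mul_comm]
      _ ≤ T y := lintegral_mono h1
  have hTfin : ∀ y, T y < ⊤ := by
    intro y
    have hswap : T y = ∑' n, ∫⁻ h : H, (U n).indicator (fun _ => δ n) ((h : G)⁻¹ * y) ∂μH := by
      rw [hT]
      rw [← lintegral_tsum]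
      intro n
      exact (measurable_const.indicator (hUopen n).measurableSet |>.comp
        ((measurable_subtype_coe.inv).mul measurable_const)).aemeasurable
    rw [hswap]
    have hterm : ∀ n, ∫⁻ h : H, (U n).indicator (fun _ => δ n) ((h : G)⁻¹ * y) ∂μH
        ≤ ((2:ℝ≥0∞) ^ n)⁻¹ := by
      intro n
      set S : Set H := {h : H | (h : G)⁻¹ * y ∈ U n} with hS
      have hSmeas : MeasurableSet S :=
        ((hUopen n).preimage ((continuous_subtype_val.inv).mul continuous_const)).measurableSet
      have heq : ∀ h : H, (U n).indicator (fun _ => δ n) ((h : G)⁻¹ * y)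
          = S.indicator (fun _ => δ n) h := by
        intro h
        by_cases hh : ((h : G)⁻¹ * y) ∈ U n
        · rw [Set.indicator_of_mem hh, Set.indicator_of_mem (show h ∈ S from hh)]
        · rw [Set.indicator_of_notMem hh, Set.indicator_of_notMem (show h ∉ S from hh)]
      rw [lintegral_congr heq, lintegral_indicator hSmeas, setLIntegral_const]
      have hSc : μH S ≤ c n := by
        rcases Set.eq_empty_or_nonempty S with hSe | ⟨h₀, hh₀⟩
        · rw [hSe]; simp
        · have hsub : S ⊆ (fun h : H => h₀⁻¹ * h) ⁻¹' (B n) := by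
            intro h hh
            simp only [Set.mem_preimage, hB, Set.mem_setOf_eq]
            have e : ((h₀ : G)⁻¹ * y) * ((h : G)⁻¹ * y)⁻¹ = ((h₀⁻¹ * h : H) : G) := by
              push_cast; group
            rw [← e]
            exact Set.mul_mem_mul (hUcomp n hh₀) (Set.inv_mem_inv.2 (hUcomp n hh))
          calc μH S ≤ μH ((fun h : H => h₀⁻¹ * h) ⁻¹' (B n)) := measure_mono hsub
            _ = μH (B n) := measure_preimage_mul μH h₀⁻¹ (B n)
      calc δ n * μH S ≤ δ n * (c n + 1) := by
            exact mul_le_mul_right (le_trans hSc (le_self_add)) _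
        _ = ((2:ℝ≥0∞) ^ n)⁻¹ * ((c n + 1)⁻¹ * (c n + 1)) := by rw [hδ]; ring
        _ ≤ ((2:ℝ≥0∞) ^ n)⁻¹ := by
            rw [ENNReal.inv_mul_cancel (by simp) (ENNReal.add_ne_top.2 ⟨(hcfin n).ne, ENNReal.one_ne_top⟩)]
            simp
    calc ∑' n, ∫⁻ h : H, (U n).indicator (fun _ => δ n) ((h : G)⁻¹ * y) ∂μH
        ≤ ∑' n : ℕ, ((2:ℝ≥0∞) ^ n)⁻¹ := ENNReal.tsum_le_tsum hterm
      _ = ∑' n : ℕ, ((2:ℝ≥0∞)⁻¹) ^ n := by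
          refine tsum_congr fun n => ?_; rw [ENNReal.inv_pow]
      _ < ⊤ := by
          rw [ENNReal.tsum_geometric, ENNReal.one_sub_inv_two]
          exact ENNReal.inv_lt_top.2 (by norm_num)
  -- the Bruhat function
  refine ⟨fun y => ψ y / T y, hψmeas.div hTmeas, fun y => ?_⟩
  have hcongr : ∀ h : H, ψ ((h : G)⁻¹ * y) / T ((h : G)⁻¹ * y)
      = ψ ((h : G)⁻¹ * y) * (T y)⁻¹ := by
    intro h
    rw [div_eq_mul_inv]
    congr 2
    simpa using hTinv h⁻¹ y
  rw [lintegral_congr hcongr, lintegral_mul_const' _ _ (by simp [(hTpos y).ne'])]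
  exact ENNReal.mul_inv_cancel (hTpos y).ne' (hTfin y).ne
end Bruhat

section ModularBounds
variable {Ω : Type*} [MeasurableSpace Ω] {μ : Measure Ω}
variable {Φ : ℝ → ℝ} {K : ℝ} (heven : ∀ x, Φ (-x) = Φ x) (hconv : ConvexOn ℝ Set.univ Φ)
  (hzero : ∀ x, Φ x = 0 ↔ x = 0) (hK : 2 < K) (hΔ : ∀ x : ℝ, 0 ≤ x → Φ (2 * x) ≤ K * Φ x)

include heven hconv hzero hK hΔ in
lemma modular_bounds {f : Ω → ℝ} (hg1 : gaugeNorm μ Φ f = 1) :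
    orliczModular μ Φ f ≠ 0 ∧ orliczModular μ Φ f ≠ ⊤ ∧
      (orliczModular μ Φ f)⁻¹ ≤ ENNReal.ofReal K ∧ orliczModular μ Φ f ≤ ENNReal.ofReal K := by
  set c := orliczModular μ Φ f with hc_def
  have hSne : {k : ℝ | 0 < k ∧ orliczModular μ Φ (fun x => f x / k) ≤ 1}.Nonempty := by
    by_contra hcon
    rw [Set.not_nonempty_iff_eq_empty] at hcon
    have h0 : gaugeNorm μ Φ f = 0 := by rw [gaugeNorm, hcon, Real.sInf_empty]
    rw [hg1] at h0; norm_num at h0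
  have hchalf : orliczModular μ Φ (fun x => f x / 2) ≤ 1 :=
    gauge_modular_le_one heven hconv hzero hSne (by rw [hg1]; norm_num)
  have hcK : c ≤ ENNReal.ofReal K := by
    have h1 : c = orliczModular μ Φ (fun x => 2 * (f x / 2)) := by
      rw [hc_def]; congr 1; funext x; ring
    calc c = orliczModular μ Φ (fun x => 2 * (f x / 2)) := h1
      _ ≤ ENNReal.ofReal K * orliczModular μ Φ (fun x => f x / 2) :=
          modular_two_le heven hK hΔ _
      _ ≤ ENNReal.ofReal K * 1 := mul_le_mul_right hchalf _
      _ = ENNReal.ofReal K := mul_one _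
  have hcfin : c ≠ ⊤ := (lt_of_le_of_lt hcK ENNReal.ofReal_lt_top).ne
  have h2f : 1 < orliczModular μ Φ (fun x => 2 * f x) := by
    have h := gauge_modular_gt_one (μ := μ) (Φ := Φ) hg1
      (show (0:ℝ) < 1/2 by norm_num) (by norm_num)
    have heqf : (fun x => f x / (1/2:ℝ)) = fun x => 2 * f x := by
      funext x; rw [one_div, div_eq_mul_inv, inv_inv]; ring
    rwa [heqf] at h
  have h2fc : orliczModular μ Φ (fun x => 2 * f x) ≤ ENNReal.ofReal K * c :=
    modular_two_le heven hK hΔ f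
  have hc0 : c ≠ 0 := by
    intro h0
    rw [h0, mul_zero] at h2fc
    simpa using lt_of_lt_of_le h2f h2fc
  refine ⟨hc0, hcfin, ?_, hcK⟩
  have h1K : (1:ℝ≥0∞) ≤ ENNReal.ofReal K * c := le_trans h2f.le h2fc
  calc c⁻¹ = 1 * c⁻¹ := (one_mul _).symm
    _ ≤ (ENNReal.ofReal K * c) * c⁻¹ := mul_le_mul_left h1K _
    _ = ENNReal.ofReal K * (c * c⁻¹) := mul_assoc _ _ _
    _ = ENNReal.ofReal K := by rw [ENNReal.mul_inv_cancel hc0 hcfin, mul_one]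

end ModularBounds

section StepA
variable {G : Type*} [Group G] [MeasurableSpace G] [MeasurableMul G]
  {μG : Measure G} [μG.IsMulLeftInvariant]
  {Φ : ℝ → ℝ} {K : ℝ} (heven : ∀ x, Φ (-x) = Φ x) (hconv : ConvexOn ℝ Set.univ Φ)
  (hzero : ∀ x, Φ x = 0 ↔ x = 0) (hK : 2 < K) (hΔ : ∀ x : ℝ, 0 ≤ x → Φ (2 * x) ≤ K * Φ x)

include heven hconv hzero hK hΔ in
lemma stepA (hcont : Continuous Φ) {f : G → ℝ} (hfmeas : Measurable f)
    {a : ℝ} (ha : 0 < a) (hafin : orliczModular μG Φ (fun x => a * f x) < ⊤)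
    (hg1 : gaugeNorm μG Φ f = 1) {s : ℝ} (hs0 : 0 < s) (hs2 : s ≤ 1/2)
    (g : G) (hdz : gaugeNorm μG Φ (fun x => f (g⁻¹ * x) - f x) ≤ s/2) :
    ∫⁻ y, ((ENNReal.ofReal (Φ (f (g⁻¹ * y))) - ENNReal.ofReal (Φ (f y)))
      + (ENNReal.ofReal (Φ (f y)) - ENNReal.ofReal (Φ (f (g⁻¹ * y))))) ∂μG
      ≤ ENNReal.ofReal (2*(s*K)) * orliczModular μG Φ f + ENNReal.ofReal s := by
  have hKpos : (0:ℝ) < K := by linarith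
  set h_z : G → ℝ := fun x => f (g⁻¹ * x) - f x with hz_def
  have hzmeas : Measurable h_z := (hfmeas.comp (measurable_const_mul _)).sub hfmeas
  -- modular of h_z is finite
  have hfin2 : orliczModular μG Φ (fun x => 2 * f x) < ⊤ :=
    modular_scale_lt_top heven hconv hzero hK hΔ ha hafin (by norm_num : (0:ℝ) < 2)
  have hinv2 : orliczModular μG Φ (fun x => 2 * f (g⁻¹ * x)) =
      orliczModular μG Φ (fun x => 2 * f x) :=
    lintegral_mul_left_eq_self (fun x => ENNReal.ofReal (Φ (2 * f x))) g⁻¹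
  have hhfin : orliczModular μG Φ h_z < ⊤ := by
    have hp : ∀ x, ENNReal.ofReal (Φ (h_z x)) ≤
        ENNReal.ofReal (Φ (2 * f (g⁻¹ * x))) + ENNReal.ofReal (Φ (2 * f x)) := by
      intro x
      have h1 : Φ (h_z x) ≤ (Φ (2 * f (g⁻¹ * x)) + Φ (2 * (- f x)))/2 := by
        have := phi_midpoint hconv (f (g⁻¹ * x)) (- f x)
        simpa [hz_def, sub_eq_add_neg] using this
      rw [show (2:ℝ) * -f x = -(2 * f x) by ring, heven] at h1
      calc ENNReal.ofReal (Φ (h_z x))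
          ≤ ENNReal.ofReal ((Φ (2 * f (g⁻¹ * x)) + Φ (2 * f x))/2) :=
            ENNReal.ofReal_le_ofReal h1
        _ ≤ ENNReal.ofReal (Φ (2 * f (g⁻¹ * x)) + Φ (2 * f x)) := by
            refine ENNReal.ofReal_le_ofReal (div_le_self ?_ one_le_two)
            have := phi_nonneg heven hconv hzero (2 * f (g⁻¹ * x))
            have := phi_nonneg heven hconv hzero (2 * f x)
            linarith
        _ ≤ _ := ENNReal.ofReal_add_le
    calc orliczModular μG Φ h_z
        ≤ ∫⁻ x, (ENNReal.ofReal (Φ (2 * f (g⁻¹ * x))) + ENNReal.ofReal (Φ (2 * f x))) ∂μG :=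
          lintegral_mono hp
      _ = orliczModular μG Φ (fun x => 2 * f (g⁻¹ * x)) + orliczModular μG Φ (fun x => 2 * f x) :=
          lintegral_add_left (ENNReal.measurable_ofReal.comp
            ((hcont.measurable.comp ((hfmeas.comp (measurable_const_mul _)).const_mul 2)))) _
      _ = orliczModular μG Φ (fun x => 2 * f x) + orliczModular μG Φ (fun x => 2 * f x) := by
          rw [hinv2]
      _ < ⊤ := ENNReal.add_lt_top.2 ⟨hfin2, hfin2⟩
  -- modular of h_z / s is ≤ 1
  have hSz : {k : ℝ | 0 < k ∧ orliczModular μG Φ (fun x => h_z x / k) ≤ 1}.Nonempty :=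
    gauge_set_nonempty_of_finite hcont ((hzero 0).2 rfl)
      (fun {u v} hu huv => phi_mono heven hconv hzero hu huv) (phi_abs heven) hzmeas hhfin
  have hmod1 : orliczModular μG Φ (fun x => h_z x / s) ≤ 1 :=
    gauge_modular_le_one heven hconv hzero hSz (by linarith [hdz] : gaugeNorm μG Φ h_z < s)
  -- pointwise bound and integration
  have habs : ∀ p q : ℝ, 0 ≤ p → 0 ≤ q →
      (ENNReal.ofReal p - ENNReal.ofReal q) + (ENNReal.ofReal q - ENNReal.ofReal p)
        = ENNReal.ofReal |p - q| := by
    intro p q hp hq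
    rcases le_total q p with hpq | hpq
    · rw [← ENNReal.ofReal_sub _ hq, tsub_eq_zero_of_le (ENNReal.ofReal_le_ofReal hpq),
        add_zero, abs_of_nonneg (by linarith)]
    · rw [← ENNReal.ofReal_sub _ hp, tsub_eq_zero_of_le (ENNReal.ofReal_le_ofReal hpq),
        zero_add, abs_of_nonpos (by linarith), neg_sub]
  have hptw : ∀ y, ((ENNReal.ofReal (Φ (f (g⁻¹ * y))) - ENNReal.ofReal (Φ (f y)))
      + (ENNReal.ofReal (Φ (f y)) - ENNReal.ofReal (Φ (f (g⁻¹ * y)))))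
      ≤ ENNReal.ofReal (s*K) * ENNReal.ofReal (Φ (f (g⁻¹ * y)))
        + ENNReal.ofReal (s*K) * ENNReal.ofReal (Φ (f y))
        + ENNReal.ofReal s * ENNReal.ofReal (Φ (h_z y / s)) := by
    intro y
    rw [habs _ _ (phi_nonneg heven hconv hzero _) (phi_nonneg heven hconv hzero _)]
    have hb := phi_absdiff heven hconv hzero hK hΔ hs0 hs2 (f (g⁻¹ * y)) (f y)
    calc ENNReal.ofReal |Φ (f (g⁻¹ * y)) - Φ (f y)|
        ≤ ENNReal.ofReal (s * K * (Φ (f (g⁻¹ * y)) + Φ (f y)) + s * Φ ((f (g⁻¹ * y) - f y) / s)) :=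
          ENNReal.ofReal_le_ofReal hb
      _ = ENNReal.ofReal (s*K) * ENNReal.ofReal (Φ (f (g⁻¹ * y)))
          + ENNReal.ofReal (s*K) * ENNReal.ofReal (Φ (f y))
          + ENNReal.ofReal s * ENNReal.ofReal (Φ (h_z y / s)) := by
          rw [ENNReal.ofReal_add
              (mul_nonneg (by positivity) (add_nonneg (phi_nonneg heven hconv hzero _)
                (phi_nonneg heven hconv hzero _)))
              (mul_nonneg hs0.le (phi_nonneg heven hconv hzero _)),
            ENNReal.ofReal_mul (by positivity),
            ENNReal.ofReal_mul hs0.le,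
            ENNReal.ofReal_add (phi_nonneg heven hconv hzero _) (phi_nonneg heven hconv hzero _),
            mul_add]
          rw [hz_def, ENNReal.ofReal_mul hs0.le]
  have hinv1 : orliczModular μG Φ (fun x => f (g⁻¹ * x)) = orliczModular μG Φ f :=
    lintegral_mul_left_eq_self (fun x => ENNReal.ofReal (Φ (f x))) g⁻¹
  calc ∫⁻ y, ((ENNReal.ofReal (Φ (f (g⁻¹ * y))) - ENNReal.ofReal (Φ (f y)))
      + (ENNReal.ofReal (Φ (f y)) - ENNReal.ofReal (Φ (f (g⁻¹ * y))))) ∂μG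
      ≤ ∫⁻ y, (ENNReal.ofReal (s*K) * ENNReal.ofReal (Φ (f (g⁻¹ * y)))
        + ENNReal.ofReal (s*K) * ENNReal.ofReal (Φ (f y))
        + ENNReal.ofReal s * ENNReal.ofReal (Φ (h_z y / s))) ∂μG := lintegral_mono hptw
    _ = (∫⁻ y, ENNReal.ofReal (s*K) * ENNReal.ofReal (Φ (f (g⁻¹ * y)))
        + ENNReal.ofReal (s*K) * ENNReal.ofReal (Φ (f y)) ∂μG)
        + ∫⁻ y, ENNReal.ofReal s * ENNReal.ofReal (Φ (h_z y / s)) ∂μG := by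
        refine lintegral_add_left ?_ _
        exact ((ENNReal.measurable_ofReal.comp (hcont.measurable.comp
          (hfmeas.comp (measurable_const_mul _)))).const_mul _).add
          ((ENNReal.measurable_ofReal.comp (hcont.measurable.comp hfmeas)).const_mul _)
    _ = ((∫⁻ y, ENNReal.ofReal (s*K) * ENNReal.ofReal (Φ (f (g⁻¹ * y))) ∂μG)
        + ∫⁻ y, ENNReal.ofReal (s*K) * ENNReal.ofReal (Φ (f y)) ∂μG)
        + ∫⁻ y, ENNReal.ofReal s * ENNReal.ofReal (Φ (h_z y / s)) ∂μG := by
        congr 1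
        exact lintegral_add_left ((ENNReal.measurable_ofReal.comp (hcont.measurable.comp
          (hfmeas.comp (measurable_const_mul _)))).const_mul _) _
    _ = (ENNReal.ofReal (s*K) * orliczModular μG Φ (fun x => f (g⁻¹ * x))
        + ENNReal.ofReal (s*K) * orliczModular μG Φ f)
        + ENNReal.ofReal s * orliczModular μG Φ (fun x => h_z x / s) := by
        rw [lintegral_const_mul' _ _ ENNReal.ofReal_ne_top,
          lintegral_const_mul' _ _ ENNReal.ofReal_ne_top,
          lintegral_const_mul' _ _ ENNReal.ofReal_ne_top]
        rfl
    _ ≤ (ENNReal.ofReal (s*K) * orliczModular μG Φ f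
        + ENNReal.ofReal (s*K) * orliczModular μG Φ f) + ENNReal.ofReal s * 1 := by
        rw [hinv1]
        exact add_le_add le_rfl (mul_le_mul_right hmod1 _)
    _ = ENNReal.ofReal (2*(s*K)) * orliczModular μG Φ f + ENNReal.ofReal s := by
        rw [mul_one]
        congr 1
        rw [show (2:ℝ)*(s*K) = s*K + s*K by ring,
          ENNReal.ofReal_add (by positivity) (by positivity), add_mul]

end StepA

section Congr
variable {Ω : Type*} [MeasurableSpace Ω] {μ : Measure Ω} {Φ : ℝ → ℝ}

lemma modular_congr {f g : Ω → ℝ} (h : f =ᵐ[μ] g) :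
    orliczModular μ Φ f = orliczModular μ Φ g := by
  refine lintegral_congr_ae ?_
  filter_upwards [h] with x hx
  rw [hx]

lemma gauge_congr {f g : Ω → ℝ} (h : f =ᵐ[μ] g) :
    gaugeNorm μ Φ f = gaugeNorm μ Φ g := by
  unfold gaugeNorm
  congr 1
  ext k
  have : orliczModular μ Φ (fun x => f x / k) = orliczModular μ Φ (fun x => g x / k) := by
    refine modular_congr ?_
    filter_upwards [h] with x hx
    simp only [hx]
  rw [Set.mem_setOf_eq, Set.mem_setOf_eq, this]

end Congr

section Key
variable {G : Type*} [Group G] [TopologicalSpace G]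
    [IsTopologicalGroup G] [LocallyCompactSpace G] [SecondCountableTopology G]
    [MeasurableSpace G] [BorelSpace G]
    (μG : Measure G) [μG.IsHaarMeasure]
    (H : Subgroup G) (hH : IsClosed (H : Set G))
    (μH : Measure H) [μH.IsHaarMeasure]

include hH in
lemma bruhat_key {β : G → ℝ≥0∞} (hβmeas : Measurable β)
    (hβint : ∀ y : G, ∫⁻ h : H, β ((h : G)⁻¹ * y) ∂μH = 1)
    (W : G → ℝ≥0∞) (hW : Measurable W) (hWfin : ∀ y, W y ≠ ⊤) :
    ∫⁻ h : H, (∫⁻ y, W ((h : G) * y) * β y ∂μG) ∂μH = ∫⁻ y, W y ∂μG := by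
  haveI : LocallyCompactSpace H := hH.isClosedEmbedding_subtypeVal.locallyCompactSpace
  haveI : BorelSpace (↥H) := Subtype.borelSpace (H : Set G)
  haveI : SecondCountableTopology (↥H) :=
    hH.isClosedEmbedding_subtypeVal.isEmbedding.secondCountableTopology
  haveI : SigmaFinite μH := inferInstance
  have hinner : ∀ h : H, ∫⁻ y, W ((h : G) * y) * β y ∂μG
      = ∫⁻ y, W y * β ((h : G)⁻¹ * y) ∂μG := by
    intro h
    rw [← lintegral_mul_left_eq_self (μ := μG) (fun t => W t * β ((h : G)⁻¹ * t)) (h : G)]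
    refine lintegral_congr fun y => ?_
    rw [inv_mul_cancel_left]
  calc ∫⁻ h : H, (∫⁻ y, W ((h : G) * y) * β y ∂μG) ∂μH
      = ∫⁻ h : H, ∫⁻ y, W y * β ((h : G)⁻¹ * y) ∂μG ∂μH := lintegral_congr hinner
    _ = ∫⁻ y, ∫⁻ h : H, W y * β ((h : G)⁻¹ * y) ∂μH ∂μG := by
        refine lintegral_lintegral_swap ?_
        exact ((hW.comp measurable_snd).mul (hβmeas.comp
          (((measurable_subtype_coe.comp measurable_fst).inv).mul measurable_snd))).aemeasurable
    _ = ∫⁻ y, W y * ∫⁻ h : H, β ((h : G)⁻¹ * y) ∂μH ∂μG := by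
        refine lintegral_congr fun y => ?_
        exact lintegral_const_mul' _ _ (hWfin y)
    _ = ∫⁻ y, W y ∂μG := by
        refine lintegral_congr fun y => ?_
        rw [hβint y, mul_one]

end Key

/-- If the left regular representation of a closed subgroup H on L^Φ(G)
(Φ a Δ₂-regular N-function) almost has invariant vectors, then H satisfies
Reiter's condition (P₁). -/
theorem almost_invariant_implies_reiterP1 {G : Type*} [Group G] [TopologicalSpace G]
    [IsTopologicalGroup G] [LocallyCompactSpace G] [SecondCountableTopology G]
    [MeasurableSpace G] [BorelSpace G]
    (μG : Measure G) [μG.IsHaarMeasure]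
    (H : Subgroup G) (hH : IsClosed (H : Set G))
    (μH : Measure H) [μH.IsHaarMeasure]
    (Φ : ℝ → ℝ) (hΦ : IsNFunction Φ)
    (hΔ2 : ∃ K > 2, ∀ x : ℝ, 0 ≤ x → Φ (2 * x) ≤ K * Φ x)
    (hai : ∀ F : Set H, IsCompact F → ∀ ε > 0, ∃ f : G → ℝ,
      MemOrlicz μG Φ f ∧ gaugeNorm μG Φ f = 1 ∧
      ∀ z ∈ F, gaugeNorm μG Φ (fun x => f ((z : G)⁻¹ * x) - f x) ≤ ε) :
    ∀ F : Set H, IsCompact F → ∀ ε > 0, ∃ U : H → ℝ,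
      (∀ y, 0 ≤ U y) ∧ Integrable U μH ∧ (∫ y, U y ∂μH = 1) ∧
      ∀ z ∈ F, ∫ y, |U (z⁻¹ * y) - U y| ∂μH < ε := by
  classical
  obtain ⟨heven, hconv, hzero, -, -⟩ := hΦ
  obtain ⟨K, hK2, hΔK⟩ := hΔ2
  have hK0 : (0:ℝ) < K := by linarith
  have hcont : Continuous Φ := continuousOn_univ.1 (hconv.continuousOn isOpen_univ)
  haveI : LocallyCompactSpace H := hH.isClosedEmbedding_subtypeVal.locallyCompactSpace
  haveI : BorelSpace (↥H) := Subtype.borelSpace (H : Set G)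
  haveI : SecondCountableTopology (↥H) :=
    hH.isClosedEmbedding_subtypeVal.isEmbedding.secondCountableTopology
  haveI : SigmaFinite μH := inferInstance
  obtain ⟨β, hβmeas, hβint⟩ := exists_bruhat H hH μH
  intro F hF ε hε
  set s : ℝ := min (1/2) (ε/(8*K)) with hs_def
  have hs0 : 0 < s := lt_min (by norm_num) (by positivity)
  have hs2 : s ≤ 1/2 := min_le_left _ _
  have hsK : 3*(s*K) < ε := by
    have h1 : s ≤ ε/(8*K) := min_le_right _ _
    have h3 : 3*((ε/(8*K))*K) = (3/8)*ε := by field_simp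
    nlinarith
  obtain ⟨f₀, hmem₀, hg₀, hdiff₀⟩ := hai F hF (s/2) (by positivity)
  obtain ⟨hf₀ae, a, ha, hafin₀⟩ := hmem₀
  set f : G → ℝ := hf₀ae.mk f₀ with hf_def
  have hfmeas : Measurable f := hf₀ae.measurable_mk
  have hff : f₀ =ᵐ[μG] f := hf₀ae.ae_eq_mk
  have hg1 : gaugeNorm μG Φ f = 1 := by rw [← gauge_congr hff]; exact hg₀
  have hafin : orliczModular μG Φ (fun x => a * f x) < ⊤ := by
    have he : (fun x => a * f₀ x) =ᵐ[μG] (fun x => a * f x) := by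
      filter_upwards [hff] with x hx; rw [hx]
    rw [← modular_congr he]; exact hafin₀
  have hdiff : ∀ z ∈ F, gaugeNorm μG Φ (fun x => f ((z:G)⁻¹ * x) - f x) ≤ s/2 := by
    intro z hz
    have h1 : (fun x => f₀ ((z:G)⁻¹ * x)) =ᵐ[μG] (fun x => f ((z:G)⁻¹ * x)) :=
      (measurePreserving_mul_left μG ((z:G))⁻¹).quasiMeasurePreserving.ae_eq_comp hff
    have htr : (fun x => f₀ ((z:G)⁻¹ * x) - f₀ x) =ᵐ[μG] (fun x => f ((z:G)⁻¹ * x) - f x) := by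
      filter_upwards [h1, hff] with x h1x h2x
      rw [h1x, h2x]
    rw [← gauge_congr htr]; exact hdiff₀ z hz
  obtain ⟨hc0, hcfin, hcinvK, hcK⟩ := modular_bounds heven hconv hzero hK2 hΔK hg1
  set c : ℝ≥0∞ := orliczModular μG Φ f with hc_def
  have hcinv_ne_top : c⁻¹ ≠ ⊤ := ENNReal.inv_ne_top.2 hc0
  set gE : G → ℝ≥0∞ := fun y => ENNReal.ofReal (Φ (f y)) * c⁻¹ with hgE_def
  have hgEmeas : Measurable gE :=
    (ENNReal.measurable_ofReal.comp (hcont.measurable.comp hfmeas)).mul_const _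
  have hgEfin : ∀ y, gE y ≠ ⊤ := fun y => ENNReal.mul_ne_top ENNReal.ofReal_ne_top hcinv_ne_top
  have hgE1 : ∫⁻ y, gE y ∂μG = 1 := by
    rw [hgE_def]
    simp only
    rw [lintegral_mul_const' _ _ hcinv_ne_top]
    exact ENNReal.mul_inv_cancel hc0 hcfin
  set UE : H → ℝ≥0∞ := fun h => ∫⁻ y, gE ((h:G) * y) * β y ∂μG with hUE_def
  have hUEmeas : Measurable UE := by
    refine Measurable.lintegral_prod_right'
      (f := fun p : H × G => gE ((p.1 : G) * p.2) * β p.2) ?_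
    exact (hgEmeas.comp ((measurable_subtype_coe.comp measurable_fst).mul
      measurable_snd)).mul (hβmeas.comp measurable_snd)
  have hUE1 : ∫⁻ h, UE h ∂μH = 1 := by
    rw [hUE_def]
    simp only
    rw [bruhat_key μG H hH μH hβmeas hβint gE hgEmeas hgEfin]
    exact hgE1
  have hUEfin_ae : ∀ᵐ h ∂μH, UE h < ⊤ := ae_lt_top hUEmeas (by rw [hUE1]; exact ENNReal.one_ne_top)
  have hUint : Integrable (fun h => (UE h).toReal) μH :=
    integrable_toReal_of_lintegral_ne_top hUEmeas.aemeasurable (by rw [hUE1]; exact ENNReal.one_ne_top)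
  have hUeq1 : ∫ h, (UE h).toReal ∂μH = 1 := by
    rw [integral_toReal hUEmeas.aemeasurable hUEfin_ae, hUE1, ENNReal.toReal_one]
  refine ⟨fun h => (UE h).toReal, fun h => ENNReal.toReal_nonneg, hUint, hUeq1, ?_⟩
  intro z hz
  set W : G → ℝ≥0∞ := fun y =>
    (gE ((z:G)⁻¹ * y) - gE y) + (gE y - gE ((z:G)⁻¹ * y)) with hW_def
  have hgEz : Measurable fun y => gE ((z:G)⁻¹ * y) := hgEmeas.comp (measurable_const_mul _)
  have hWmeas : Measurable W := (hgEz.sub hgEmeas).add (hgEmeas.sub hgEz)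
  have hWfin : ∀ y, W y ≠ ⊤ := fun y => ENNReal.add_ne_top.2
    ⟨ne_top_of_le_ne_top (hgEfin _) tsub_le_self, ne_top_of_le_ne_top (hgEfin _) tsub_le_self⟩
  have hWbound : ∫⁻ y, W y ∂μG ≤ ENNReal.ofReal (3*(s*K)) := by
    have hnum := stepA heven hconv hzero hK2 hΔK hcont hfmeas ha hafin hg1 hs0 hs2
      ((z:G)) (hdiff z hz)
    rw [← hc_def] at hnum
    have hWy : ∀ y, W y = ((ENNReal.ofReal (Φ (f ((z:G)⁻¹ * y))) - ENNReal.ofReal (Φ (f y)))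
        + (ENNReal.ofReal (Φ (f y)) - ENNReal.ofReal (Φ (f ((z:G)⁻¹ * y))))) * c⁻¹ := by
      intro y
      rw [hW_def, hgE_def]
      simp only
      rw [add_mul, ENNReal.sub_mul (fun _ _ => hcinv_ne_top),
        ENNReal.sub_mul (fun _ _ => hcinv_ne_top)]
    calc ∫⁻ y, W y ∂μG
        = (∫⁻ y, ((ENNReal.ofReal (Φ (f ((z:G)⁻¹ * y))) - ENNReal.ofReal (Φ (f y)))
          + (ENNReal.ofReal (Φ (f y)) - ENNReal.ofReal (Φ (f ((z:G)⁻¹ * y))))) ∂μG) * c⁻¹ := by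
          rw [← lintegral_mul_const' _ _ hcinv_ne_top]
          exact lintegral_congr hWy
      _ ≤ (ENNReal.ofReal (2*(s*K)) * c + ENNReal.ofReal s) * c⁻¹ := mul_le_mul_left hnum _
      _ = ENNReal.ofReal (2*(s*K)) * (c * c⁻¹) + ENNReal.ofReal s * c⁻¹ := by
          rw [add_mul, mul_assoc]
      _ ≤ ENNReal.ofReal (2*(s*K)) * 1 + ENNReal.ofReal s * ENNReal.ofReal K :=
          add_le_add (mul_le_mul_right
            (le_of_eq (ENNReal.mul_inv_cancel hc0 hcfin)) _) (mul_le_mul_right hcinvK _)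
      _ = ENNReal.ofReal (3*(s*K)) := by
          rw [mul_one, ← ENNReal.ofReal_mul hs0.le,
            ← ENNReal.ofReal_add (by positivity) (by positivity)]
          congr 1; ring
  set DE : H → ℝ≥0∞ := fun h => ∫⁻ y, W ((h:G) * y) * β y ∂μG with hDE_def
  have hDEmeas : Measurable DE := by
    refine Measurable.lintegral_prod_right'
      (f := fun p : H × G => W ((p.1 : G) * p.2) * β p.2) ?_
    exact (hWmeas.comp ((measurable_subtype_coe.comp measurable_fst).mul
      measurable_snd)).mul (hβmeas.comp measurable_snd)
  have hDEsum : ∫⁻ h, DE h ∂μH ≤ ENNReal.ofReal (3*(s*K)) := by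
    rw [hDE_def]
    simp only
    rw [bruhat_key μG H hH μH hβmeas hβint W hWmeas hWfin]
    exact hWbound
  have hDEfin_ae : ∀ᵐ h ∂μH, DE h < ⊤ :=
    ae_lt_top hDEmeas (lt_of_le_of_lt hDEsum ENNReal.ofReal_lt_top).ne
  have htrans : ∀ (P : H → Prop), (∀ᵐ h ∂μH, P h) → (∀ᵐ h ∂μH, P (z⁻¹ * h)) := by
    intro P hP
    rw [ae_iff] at hP ⊢
    have he : {h : H | ¬ P (z⁻¹ * h)} = (fun h : H => z⁻¹ * h) ⁻¹' {h : H | ¬ P h} := rfl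
    rw [he, measure_preimage_mul]
    exact hP
  have hUE'eq : ∀ h : H, UE (z⁻¹ * h) = ∫⁻ y, gE ((z:G)⁻¹ * ((h:G) * y)) * β y ∂μG := by
    intro h
    rw [hUE_def]
    simp only
    refine lintegral_congr fun y => ?_
    congr 2
    push_cast
    rw [mul_assoc]
  have hptbound : ∀ᵐ h ∂μH, |(UE (z⁻¹ * h)).toReal - (UE h).toReal| ≤ (DE h).toReal := by
    filter_upwards [hDEfin_ae, hUEfin_ae, htrans _ hUEfin_ae] with h hDEh hUEh hUE'h
    have hmeas1 : Measurable fun y => gE ((h:G) * y) * β y :=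
      (hgEmeas.comp (measurable_const_mul _)).mul hβmeas
    have hmeas2 : Measurable fun y => gE ((z:G)⁻¹ * ((h:G) * y)) * β y :=
      (hgEmeas.comp ((measurable_const_mul _).comp (measurable_const_mul _))).mul hβmeas
    have key1 : UE (z⁻¹ * h) ≤ UE h + DE h := by
      rw [hUE'eq h]
      have hle : ∀ y, gE ((z:G)⁻¹ * ((h:G) * y)) * β y
          ≤ gE ((h:G) * y) * β y + W ((h:G) * y) * β y := by
        intro y
        have h2 : gE ((z:G)⁻¹ * ((h:G) * y)) ≤ gE ((h:G) * y) + W ((h:G) * y) := by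
          rw [hW_def]
          simp only
          calc gE ((z:G)⁻¹ * ((h:G) * y))
              ≤ gE ((h:G) * y) + (gE ((z:G)⁻¹ * ((h:G) * y)) - gE ((h:G) * y)) := le_add_tsub
            _ ≤ gE ((h:G) * y) + ((gE ((z:G)⁻¹ * ((h:G) * y)) - gE ((h:G) * y))
                + (gE ((h:G) * y) - gE ((z:G)⁻¹ * ((h:G) * y)))) :=
                add_le_add_right (self_le_add_right _ _) _
        calc gE ((z:G)⁻¹ * ((h:G) * y)) * β y
            ≤ (gE ((h:G) * y) + W ((h:G) * y)) * β y := mul_le_mul_left h2 _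
          _ = gE ((h:G) * y) * β y + W ((h:G) * y) * β y := add_mul _ _ _
      calc ∫⁻ y, gE ((z:G)⁻¹ * ((h:G) * y)) * β y ∂μG
          ≤ ∫⁻ y, (gE ((h:G) * y) * β y + W ((h:G) * y) * β y) ∂μG := lintegral_mono hle
        _ = UE h + DE h := by rw [lintegral_add_left hmeas1]
    have key2 : UE h ≤ UE (z⁻¹ * h) + DE h := by
      rw [hUE'eq h]
      have hle : ∀ y, gE ((h:G) * y) * β y
          ≤ gE ((z:G)⁻¹ * ((h:G) * y)) * β y + W ((h:G) * y) * β y := by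
        intro y
        have h2 : gE ((h:G) * y) ≤ gE ((z:G)⁻¹ * ((h:G) * y)) + W ((h:G) * y) := by
          rw [hW_def]
          simp only
          calc gE ((h:G) * y)
              ≤ gE ((z:G)⁻¹ * ((h:G) * y)) + (gE ((h:G) * y) - gE ((z:G)⁻¹ * ((h:G) * y))) :=
                le_add_tsub
            _ ≤ gE ((z:G)⁻¹ * ((h:G) * y)) + ((gE ((z:G)⁻¹ * ((h:G) * y)) - gE ((h:G) * y))
                + (gE ((h:G) * y) - gE ((z:G)⁻¹ * ((h:G) * y)))) :=
                add_le_add_right (self_le_add_left _ _) _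
        calc gE ((h:G) * y) * β y
            ≤ (gE ((z:G)⁻¹ * ((h:G) * y)) + W ((h:G) * y)) * β y := mul_le_mul_left h2 _
          _ = gE ((z:G)⁻¹ * ((h:G) * y)) * β y + W ((h:G) * y) * β y := add_mul _ _ _
      calc UE h = ∫⁻ y, gE ((h:G) * y) * β y ∂μG := by rw [hUE_def]
        _ ≤ ∫⁻ y, (gE ((z:G)⁻¹ * ((h:G) * y)) * β y + W ((h:G) * y) * β y) ∂μG :=
            lintegral_mono hle
        _ = (∫⁻ y, gE ((z:G)⁻¹ * ((h:G) * y)) * β y ∂μG) + DE h := by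
            rw [lintegral_add_left hmeas2]
    have hA := ENNReal.toReal_mono (ENNReal.add_ne_top.2 ⟨hUEh.ne, hDEh.ne⟩) key1
    rw [ENNReal.toReal_add hUEh.ne hDEh.ne] at hA
    have hB := ENNReal.toReal_mono (ENNReal.add_ne_top.2 ⟨hUE'h.ne, hDEh.ne⟩) key2
    rw [ENNReal.toReal_add hUE'h.ne hDEh.ne] at hB
    rw [abs_sub_le_iff]
    constructor
    · linarith
    · linarith
  have hDint : Integrable (fun h => (DE h).toReal) μH :=
    integrable_toReal_of_lintegral_ne_top hDEmeas.aemeasurable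
      (lt_of_le_of_lt hDEsum ENNReal.ofReal_lt_top).ne
  have hUcomp : Integrable (fun h : H => (UE (z⁻¹ * h)).toReal) μH :=
    ((measurePreserving_mul_left μH z⁻¹).integrable_comp hUint.aestronglyMeasurable).2 hUint
  have habsint : Integrable (fun h : H => |(UE (z⁻¹ * h)).toReal - (UE h).toReal|) μH :=
    (hUcomp.sub hUint).abs
  calc ∫ y, |(UE (z⁻¹ * y)).toReal - (UE y).toReal| ∂μH
      ≤ ∫ h, (DE h).toReal ∂μH := integral_mono_ae habsint hDint hptbound
    _ = (∫⁻ h, DE h ∂μH).toReal := integral_toReal hDEmeas.aemeasurable hDEfin_ae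
    _ ≤ 3*(s*K) := ENNReal.toReal_le_of_le_ofReal (by positivity) hDEsum
    _ < ε := hsK
end
end
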